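/- Let L be the free Lie algebra on x, y over a field of characteristic 0 and δ the derivation with δ(x)=0, δ(y)=x. If f = ∑_{j=0}^{k} α_j [y,x,x^{(j)},y,x^{(k-j)}] (left-normed, with x^{(m)} meaning m copies of x) satisfies δ(f) = 0, then ∑_{j=0}^{k} α_j = 0. -/

import Mathlib

open Polynomial LinearMap

attribute [local instance] LieRing.ofAssociativeRing

/-- Left-normed iterated bracketing by `x`: `adRight x n u = [u, x, ..., x]` (n copies of x). -/
def adRight {L : Type*} [LieRing L] (x : L) : ℕ → L → L
  | 0, u => u
  | n + 1, u => ⁅adRight x n u, x⁆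

section aux
variable {K : Type*} [Field K]

lemma adRight_add {L : Type*} [LieRing L] (x : L) (a b : ℕ) (u : L) :
    adRight x a (adRight x b u) = adRight x (b + a) u := by
  induction a with
  | zero => rfl
  | succ n ih => show ⁅adRight x n (adRight x b u), x⁆ = ⁅adRight x (b+n) u, x⁆; rw [ih]

lemma adRight_zero_elem {L : Type*} [LieRing L] (x : L) (n : ℕ) :
    adRight x n (0 : L) = 0 := by
  induction n with
  | zero => rfl
  | succ n ih => show ⁅adRight x n (0:L), x⁆ = 0; rw [ih, zero_lie]

lemma lieHom_adRight {L L' : Type*} [LieRing L] [LieRing L'] [LieAlgebra K L] [LieAlgebra K L']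
    (ρ : L →ₗ⁅K⁆ L') (x u : L) (n : ℕ) :
    ρ (adRight x n u) = adRight (ρ x) n (ρ u) := by
  induction n with
  | zero => rfl
  | succ n ih => show ρ ⁅adRight x n u, x⁆ = ⁅adRight (ρ x) n (ρ u), ρ x⁆; rw [ρ.map_lie, ih]

noncomputable def Dop : Module.End K K[X] := Polynomial.derivative

lemma bracket_mulLeft_D (f : K[X]) :
    ⁅LinearMap.mulLeft K f, (Dop : Module.End K K[X])⁆ = LinearMap.mulLeft K (-(derivative f)) := by
  refine LinearMap.ext fun p => ?_
  simp only [Ring.lie_def, LinearMap.sub_apply, Module.End.mul_apply, LinearMap.mulLeft_apply,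
    Dop, derivative_mul, LinearMap.neg_apply, neg_mul]
  ring

lemma adRight_D_mulLeft (f : K[X]) (n : ℕ) :
    adRight (Dop : Module.End K K[X]) n (LinearMap.mulLeft K f)
      = LinearMap.mulLeft K ((-1 : K[X])^n * derivative^[n] f) := by
  induction n with
  | zero => simp [adRight]
  | succ n ih =>
    show ⁅adRight Dop n (mulLeft K f), Dop⁆ = _
    rw [ih, bracket_mulLeft_D, Function.iterate_succ_apply', pow_succ]
    congr 1
    have hC : ((-1 : K[X]) ^ n) = C ((-1 : K) ^ n) := by simp
    rw [hC, derivative_C_mul, ← hC]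
    ring

lemma adRight_ne_zero [CharZero K] (n : ℕ) :
    adRight (FreeLieAlgebra.of K (0 : Fin 2)) n (FreeLieAlgebra.of K (1 : Fin 2)) ≠ 0 := by
  intro hzero
  set g : Fin 2 → Module.End K K[X] := ![Dop, LinearMap.mulLeft K (X ^ n)] with hg
  set ρ : FreeLieAlgebra K (Fin 2) →ₗ⁅K⁆ Module.End K K[X] := FreeLieAlgebra.lift K g with hρ
  have h0 : ρ (FreeLieAlgebra.of K (0 : Fin 2)) = Dop := by
    rw [hρ, FreeLieAlgebra.lift_of_apply]; rfl
  have h1 : ρ (FreeLieAlgebra.of K (1 : Fin 2)) = LinearMap.mulLeft K (X ^ n) := by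
    rw [hρ, FreeLieAlgebra.lift_of_apply]; rfl
  have := congrArg ρ hzero
  rw [lieHom_adRight, h0, h1, map_zero, adRight_D_mulLeft] at this
  have h2 := congrArg (fun T : Module.End K K[X] => T 1) this
  simp only [LinearMap.mulLeft_apply, LinearMap.zero_apply, mul_one,
    Polynomial.iterate_derivative_X_pow_eq_smul, Nat.sub_self, pow_zero,
    Polynomial.smul_eq_C_mul, mul_one, Nat.descFactorial_self] at h2
  have hne : ((-1 : K[X]) ^ n * C ((Nat.factorial n : K))) ≠ 0 := by
    apply mul_ne_zero
    · exact pow_ne_zero _ (by norm_num)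
    · rw [Ne, Polynomial.C_eq_zero]
      exact Nat.cast_ne_zero.mpr (Nat.factorial_ne_zero n)
  exact hne h2

end aux

theorem degree_two_in_y_constant_coeff_sum {K : Type*} [Field K] [CharZero K]
    (δ : FreeLieAlgebra K (Fin 2) →ₗ[K] FreeLieAlgebra K (Fin 2))
    (hδ : ∀ a b : FreeLieAlgebra K (Fin 2), δ ⁅a, b⁆ = ⁅δ a, b⁆ + ⁅a, δ b⁆)
    (hx : δ (FreeLieAlgebra.of K (0 : Fin 2)) = 0)
    (hy : δ (FreeLieAlgebra.of K (1 : Fin 2)) = FreeLieAlgebra.of K (0 : Fin 2))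
    (k : ℕ) (α : ℕ → K) (f : FreeLieAlgebra K (Fin 2))
    (hf : f = ∑ j ∈ Finset.range (k + 1),
      α j • adRight (FreeLieAlgebra.of K (0 : Fin 2)) (k - j)
        ⁅adRight (FreeLieAlgebra.of K (0 : Fin 2)) j
          ⁅FreeLieAlgebra.of K (1 : Fin 2), FreeLieAlgebra.of K (0 : Fin 2)⁆, FreeLieAlgebra.of K (1 : Fin 2)⁆)
    (h : δ f = 0) :
    ∑ j ∈ Finset.range (k + 1), α j = 0 := by
  set x := FreeLieAlgebra.of K (0 : Fin 2)
  set y := FreeLieAlgebra.of K (1 : Fin 2)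
  -- δ commutes with adRight x
  have hcom : ∀ (n : ℕ) (u : FreeLieAlgebra K (Fin 2)),
      δ (adRight x n u) = adRight x n (δ u) := by
    intro n
    induction n with
    | zero => intro u; rfl
    | succ n ih =>
      intro u
      show δ ⁅adRight x n u, x⁆ = ⁅adRight x n (δ u), x⁆
      rw [hδ, hx, lie_zero, add_zero, ih]
  -- δ of each summand
  have hterm : ∀ j ∈ Finset.range (k + 1),
      δ (adRight x (k - j) ⁅adRight x j ⁅y, x⁆, y⁆) = adRight x (k + 2) y := by
    intro j hj
    rw [Finset.mem_range] at hj
    have hj' : j ≤ k := Nat.lt_succ_iff.mp hj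
    rw [hcom, hδ, hcom, hδ, hy, hx, lie_zero, add_zero, lie_self, adRight_zero_elem, zero_lie,
      zero_add]
    have h1 : ⁅adRight x j ⁅y, x⁆, x⁆ = adRight x (j + 2) y := by
      show adRight x 1 (adRight x j (adRight x 1 y)) = _
      rw [adRight_add, adRight_add]
      congr 1
      omega
    rw [h1, adRight_add]
    congr 1
    omega
  have hδf : δ f = (∑ j ∈ Finset.range (k + 1), α j) • adRight x (k + 2) y := by
    rw [hf, map_sum, Finset.sum_smul]
    refine Finset.sum_congr rfl fun j hj => ?_
    rw [map_smul, hterm j hj]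
  rw [h] at hδf
  have := adRight_ne_zero (K := K) (k + 2)
  rcases smul_eq_zero.mp hδf.symm with h' | h'
  · exact h'
  · exact absurd h' this
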